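/- Let α, β > 0 and γ ≥ 0, and let (u,f) be a twice continuously differentiable solution on (0,∞) of u'' = (αβ/2) f² u + u(u²−1)/r² and f'' = −(2/r) f' + (β/r²) f u² + γ f(f²−1), satisfying 0 ≤ u(r) ≤ 1 and 0 ≤ f(r) ≤ 1 for all r > 0, with lim_{r→0} u(r)=1, lim_{r→0} f(r)=0, lim_{r→∞} u(r)=0, lim_{r→∞} f(r)=1, such that u and f are not identically 0 or identically 1. Then the strict inequalities 0 < u(r) < 1 and 0 < f(r) < 1 hold for every r > 0. -/

import Mathlib

open MeasureTheory Filter Set Topology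

noncomputable section

/-- Forward Gronwall: a function with `‖v'‖ ≤ K ‖v‖` vanishing at the left endpoint
vanishes on the whole interval. -/
lemma zero_forward {E : Type*} [NormedAddCommGroup E] [NormedSpace ℝ E]
    {v v' : ℝ → E} {a b K : ℝ}
    (hd : ∀ t ∈ Icc a b, HasDerivAt v (v' t) t)
    (hK : ∀ t ∈ Icc a b, ‖v' t‖ ≤ K * ‖v t‖)
    (h0 : v a = 0) : ∀ t ∈ Icc a b, v t = 0 := by
  intro t ht
  have hc : ContinuousOn v (Icc a b) := fun s hs =>
    ((hd s hs).continuousAt).continuousWithinAt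
  have hb := norm_le_gronwallBound_of_norm_deriv_right_le (δ := 0) (ε := 0) (K := K) hc
    (fun s hs => ((hd s (Ico_subset_Icc_self hs)).hasDerivWithinAt))
    (by simp [h0]) (fun s hs => by simpa using hK s (Ico_subset_Icc_self hs)) t ht
  rw [gronwallBound_ε0_δ0] at hb
  simpa using norm_le_zero_iff.mp hb

/-- Two-sided Gronwall uniqueness: vanishing at an interior point with `‖v'‖ ≤ K ‖v‖`
forces vanishing on the whole interval. -/
lemma zero_of_gronwall {E : Type*} [NormedAddCommGroup E] [NormedSpace ℝ E]
    {v v' : ℝ → E} {a b K r₀ : ℝ}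
    (hd : ∀ t ∈ Icc a b, HasDerivAt v (v' t) t)
    (hK : ∀ t ∈ Icc a b, ‖v' t‖ ≤ K * ‖v t‖)
    (hr₀ : r₀ ∈ Icc a b) (h0 : v r₀ = 0) : ∀ t ∈ Icc a b, v t = 0 := by
  intro t ht
  rcases le_total r₀ t with h | h
  · exact zero_forward (fun s hs => hd s ⟨hr₀.1.trans hs.1, hs.2⟩)
      (fun s hs => hK s ⟨hr₀.1.trans hs.1, hs.2⟩) h0 t ⟨h, ht.2⟩
  · -- reflect about r₀
    have key : ∀ s ∈ Icc r₀ (2 * r₀ - t), v (2 * r₀ - s) = 0 := by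
      apply zero_forward (v' := fun s => (-1 : ℝ) • v' (2 * r₀ - s)) (K := K)
      · intro s hs
        have hmem : 2 * r₀ - s ∈ Icc a b := by
          constructor <;> nlinarith [ht.1, hr₀.2, hs.1, hs.2]
        have := (hd _ hmem).scomp (h := fun s : ℝ => 2 * r₀ - s) (h' := (-1 : ℝ))
          (x := s) (by simpa using ((hasDerivAt_id s).const_sub (2 * r₀)))
        exact this
      · intro s hs
        have hmem : 2 * r₀ - s ∈ Icc a b := by
          constructor <;> nlinarith [ht.1, hr₀.2, hs.1, hs.2]
        simpa using hK _ hmem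
      · rw [show 2 * r₀ - r₀ = r₀ by ring]; exact h0
    have := key (2 * r₀ - t) ⟨by linarith, by linarith⟩
    simpa using this

/-- No interior maximum at a point where the second derivative is positive. -/
lemma no_interior_max {g g' : ℝ → ℝ} {r₀ c : ℝ} (hr₀ : 0 < r₀)
    (hg : ∀ t, 0 < t → HasDerivAt g (g' t) t)
    (hg' : HasDerivAt g' c r₀) (hc : 0 < c) (h0 : g' r₀ = 0)
    (hmax : ∀ t, 0 < t → g t ≤ g r₀) : False := by
  have hslope : Tendsto (slope g' r₀) (𝓝[≠] r₀) (𝓝 c) :=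
    hasDerivAt_iff_tendsto_slope.mp hg'
  have hev : ∀ᶠ s in 𝓝[>] r₀, 0 < slope g' r₀ s :=
    (hslope.eventually (eventually_gt_nhds hc)).filter_mono
      (nhdsWithin_mono _ (fun x hx => ne_of_gt hx))
  obtain ⟨m, hm, hsub⟩ := mem_nhdsGT_iff_exists_Ioo_subset.mp hev
  have hpos : ∀ s ∈ Ioo r₀ m, 0 < g' s := by
    intro s hs
    have h1 : 0 < slope g' r₀ s := hsub hs
    rw [slope_def_field, h0, sub_zero] at h1
    have h2 : 0 < s - r₀ := by linarith [hs.1]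
    have := mul_pos h1 h2
    rwa [div_mul_cancel₀ _ (ne_of_gt h2)] at this
  set m' : ℝ := (r₀ + m) / 2 with hm'
  have hrm' : r₀ < m' := by simp only [hm']; linarith [mem_Ioi.mp hm]
  have hcont : ContinuousOn g (Icc r₀ m') := fun s hs =>
    (hg s (lt_of_lt_of_le hr₀ hs.1)).continuousAt.continuousWithinAt
  obtain ⟨ξ, hξ, hξeq⟩ := exists_hasDerivAt_eq_slope g g' hrm' hcont
    (fun s hs => hg s (hr₀.trans hs.1))
  have hξpos : 0 < g' ξ := hpos ξ ⟨hξ.1, by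
    simp only [hm'] at hξ ⊢; linarith [hξ.2, mem_Ioi.mp hm]⟩
  have hle : g m' ≤ g r₀ := hmax m' (hr₀.trans hrm')
  rw [hξeq] at hξpos
  have h2 : 0 < m' - r₀ := by linarith
  have h3 := mul_pos hξpos h2
  rw [div_mul_cancel₀ _ h2.ne'] at h3
  linarith


/-- `(u,f)` is a (twice continuously differentiable) classical solution on `(0,∞)` of
`u'' = (αβ/2) f² u + u(u²−1)/r²` and `f'' = −(2/r) f' + (β/r²) f u² + γ f(f²−1)`,
with first derivatives `u'`, `f'`. -/
def SolvesODE (α β γ : ℝ) (u u' f f' : ℝ → ℝ) : Prop :=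
  ∀ r : ℝ, 0 < r →
    HasDerivAt u (u' r) r ∧ HasDerivAt f (f' r) r ∧
    HasDerivAt u' (α * β / 2 * f r ^ 2 * u r + u r * (u r ^ 2 - 1) / r ^ 2) r ∧
    HasDerivAt f' (-(2 / r) * f' r + β / r ^ 2 * f r * u r ^ 2
        + γ * f r * (f r ^ 2 - 1)) r

set_option maxHeartbeats 2000000 in
/-- a solution with `0 ≤ u,f ≤ 1`, the full boundary conditions, and
`u`, `f` not identically `0` or `1`, satisfies the strict bounds `0 < u < 1`,
`0 < f < 1` on `(0,∞)`. -/
theorem strict_bounds (α β γ : ℝ) (hα : 0 < α) (hβ : 0 < β) (hγ : 0 ≤ γ)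
    (u u' f f' : ℝ → ℝ) (hsol : SolvesODE α β γ u u' f f')
    (hu01 : ∀ r : ℝ, 0 < r → 0 ≤ u r ∧ u r ≤ 1)
    (hf01 : ∀ r : ℝ, 0 < r → 0 ≤ f r ∧ f r ≤ 1)
    (hu0 : Tendsto u (𝓝[>] (0 : ℝ)) (𝓝 1))
    (hf0 : Tendsto f (𝓝[>] (0 : ℝ)) (𝓝 0))
    (huinf : Tendsto u atTop (𝓝 0))
    (hfinf : Tendsto f atTop (𝓝 1))
    (hu_ne0 : ¬ ∀ r : ℝ, 0 < r → u r = 0)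
    (hu_ne1 : ¬ ∀ r : ℝ, 0 < r → u r = 1)
    (hf_ne0 : ¬ ∀ r : ℝ, 0 < r → f r = 0)
    (hf_ne1 : ¬ ∀ r : ℝ, 0 < r → f r = 1) :
    ∀ r : ℝ, 0 < r → 0 < u r ∧ u r < 1 ∧ 0 < f r ∧ f r < 1 := by
  -- Claim A : u > 0 on (0,∞)
  have hupos : ∀ r : ℝ, 0 < r → 0 < u r := by
    by_contra h
    push_neg at h
    obtain ⟨r₀, hr₀, hle⟩ := h
    have hu0' : u r₀ = 0 := le_antisymm hle (hu01 r₀ hr₀).1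
    have hmin : IsLocalMin u r₀ := by
      filter_upwards [isOpen_Ioi.mem_nhds hr₀] with t ht
      rw [hu0']; exact (hu01 t ht).1
    have hu'0 : u' r₀ = 0 := hmin.hasDerivAt_eq_zero (hsol r₀ hr₀).1
    have key : ∀ a : ℝ, 0 < a → a ≤ r₀ → u a = 0 := by
      intro a ha har
      set K : ℝ := 1 + α * β / 2 + 1 / a ^ 2 with hKdef
      have hd : ∀ t ∈ Icc a r₀, HasDerivAt (fun t => (u t, u' t))
          ((fun t => (u' t, α * β / 2 * f t ^ 2 * u t + u t * (u t ^ 2 - 1) / t ^ 2)) t) t := by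
        intro t ht
        have ht0 : 0 < t := lt_of_lt_of_le ha ht.1
        exact (hsol t ht0).1.prodMk (hsol t ht0).2.2.1
      have hKb : ∀ t ∈ Icc a r₀,
          ‖(fun t => (u' t, α * β / 2 * f t ^ 2 * u t + u t * (u t ^ 2 - 1) / t ^ 2)) t‖
          ≤ K * ‖(fun t => (u t, u' t)) t‖ := by
        intro t ht
        have ht0 : 0 < t := lt_of_lt_of_le ha ht.1
        obtain ⟨hu1, hu2⟩ := hu01 t ht0
        obtain ⟨hf1, hf2⟩ := hf01 t ht0
        have hab : (0:ℝ) ≤ α * β / 2 := by positivity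
        have hq : 1 / t ^ 2 ≤ 1 / a ^ 2 := by
          apply one_div_le_one_div_of_le (by positivity)
          nlinarith [ht.1]
        have hq0 : (0:ℝ) ≤ 1 / t ^ 2 := by positivity
        have habs : |α * β / 2 * f t ^ 2 * u t + u t * (u t ^ 2 - 1) / t ^ 2|
            ≤ (α * β / 2 + 1 / a ^ 2) * |u t| := by
          rw [abs_of_nonneg hu1]
          have hE : α * β / 2 * f t ^ 2 * u t + u t * (u t ^ 2 - 1) / t ^ 2
              = α * β / 2 * f t ^ 2 * u t + u t * (u t ^ 2 - 1) * (1 / t ^ 2) := by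
            ring
          rw [hE, abs_le]
          constructor
          · nlinarith [mul_nonneg (mul_nonneg hab (sq_nonneg (f t))) hu1,
              mul_nonneg (mul_nonneg hu1 (mul_nonneg hu1 hu1)) hq0,
              mul_nonneg hu1 (sub_nonneg.mpr hq)]
          · nlinarith [mul_nonneg (mul_nonneg hab hu1) (by nlinarith : (0:ℝ) ≤ 1 - f t ^ 2),
              mul_nonneg (mul_nonneg hu1 (by nlinarith : (0:ℝ) ≤ 1 - u t ^ 2)) hq0,
              mul_nonneg hu1 hq0]
        have hM0 : (0:ℝ) ≤ max ‖u t‖ ‖u' t‖ :=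
          le_trans (norm_nonneg _) (le_max_left _ _)
        have hK1 : (1:ℝ) ≤ K := by
          rw [hKdef]
          have e1 : (0:ℝ) ≤ 1 / a ^ 2 := by positivity
          linarith
        simp only [Prod.norm_def]
        apply max_le
        · exact le_trans (le_max_right _ _) (le_mul_of_one_le_left hM0 hK1)
        · calc ‖α * β / 2 * f t ^ 2 * u t + u t * (u t ^ 2 - 1) / t ^ 2‖
              ≤ (α * β / 2 + 1 / a ^ 2) * |u t| := habs
            _ ≤ K * max ‖u t‖ ‖u' t‖ := by
                apply mul_le_mul _ _ (abs_nonneg _) (le_trans zero_le_one hK1)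
                · rw [hKdef]; linarith
                · exact le_max_left _ _
      have hvan := zero_of_gronwall hd hKb ⟨har, le_refl r₀⟩
        (show (u r₀, u' r₀) = (0 : ℝ × ℝ) by rw [hu0', hu'0]; rfl)
      have h2 : (u a, u' a) = (0 : ℝ × ℝ) := hvan a ⟨le_refl a, har⟩
      simpa using congrArg Prod.fst h2
    have hzero : Tendsto u (𝓝[>] (0:ℝ)) (𝓝 0) := by
      have hev : u =ᶠ[𝓝[>] (0:ℝ)] fun _ => (0:ℝ) := by
        filter_upwards [Ioo_mem_nhdsGT_of_mem (Set.mem_Ico.mpr ⟨le_refl 0, hr₀⟩)] with t ht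
        exact key t ht.1 ht.2.le
      exact tendsto_const_nhds.congr' hev.symm
    exact one_ne_zero (tendsto_nhds_unique hu0 hzero)
  -- Claim C : f > 0 on (0,∞)
  have hfpos : ∀ r : ℝ, 0 < r → 0 < f r := by
    by_contra h
    push_neg at h
    obtain ⟨r₀, hr₀, hle⟩ := h
    have hf0' : f r₀ = 0 := le_antisymm hle (hf01 r₀ hr₀).1
    have hmin : IsLocalMin f r₀ := by
      filter_upwards [isOpen_Ioi.mem_nhds hr₀] with t ht
      rw [hf0']; exact (hf01 t ht).1
    have hf'0 : f' r₀ = 0 := hmin.hasDerivAt_eq_zero (hsol r₀ hr₀).2.1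
    have key : ∀ b : ℝ, r₀ ≤ b → f b = 0 := by
      intro b hb
      set K : ℝ := 1 + 2 / r₀ + β / r₀ ^ 2 + γ with hKdef
      have hd : ∀ t ∈ Icc r₀ b, HasDerivAt (fun t => (f t, f' t))
          ((fun t => (f' t, -(2 / t) * f' t + β / t ^ 2 * f t * u t ^ 2
            + γ * f t * (f t ^ 2 - 1))) t) t := by
        intro t ht
        have ht0 : 0 < t := lt_of_lt_of_le hr₀ ht.1
        exact (hsol t ht0).2.1.prodMk (hsol t ht0).2.2.2
      have hKb : ∀ t ∈ Icc r₀ b,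
          ‖(fun t => (f' t, -(2 / t) * f' t + β / t ^ 2 * f t * u t ^ 2
            + γ * f t * (f t ^ 2 - 1))) t‖
          ≤ K * ‖(fun t => (f t, f' t)) t‖ := by
        intro t ht
        have ht0 : 0 < t := lt_of_lt_of_le hr₀ ht.1
        obtain ⟨hu1, hu2⟩ := hu01 t ht0
        obtain ⟨hf1, hf2⟩ := hf01 t ht0
        set M : ℝ := max ‖f t‖ ‖f' t‖ with hMdef
        have hMf : |f t| ≤ M := le_max_left _ _
        have hMf' : |f' t| ≤ M := le_max_right _ _
        have hM0 : (0:ℝ) ≤ M := le_trans (abs_nonneg _) hMf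
        have h1 : |-(2 / t) * f' t| ≤ 2 / r₀ * M := by
          rw [abs_mul, abs_neg, abs_of_nonneg (by positivity : (0:ℝ) ≤ 2 / t)]
          have e1 : 2 / t ≤ 2 / r₀ := by
            apply div_le_div_of_nonneg_left (by norm_num) hr₀ ht.1
          exact mul_le_mul e1 hMf' (abs_nonneg _) (by positivity)
        have h2 : |β / t ^ 2 * f t * u t ^ 2| ≤ β / r₀ ^ 2 * M := by
          rw [abs_mul, abs_mul, abs_of_nonneg (by positivity : (0:ℝ) ≤ β / t ^ 2),
            abs_of_nonneg (sq_nonneg (u t))]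
          have e1 : β / t ^ 2 ≤ β / r₀ ^ 2 := by
            apply div_le_div_of_nonneg_left hβ.le (by positivity)
            nlinarith [ht.1]
          have e2 : u t ^ 2 ≤ 1 := by nlinarith
          calc β / t ^ 2 * |f t| * u t ^ 2 ≤ β / r₀ ^ 2 * M * 1 := by
                apply mul_le_mul (mul_le_mul e1 hMf (abs_nonneg _) (by positivity)) e2
                  (sq_nonneg _) (by positivity)
            _ = β / r₀ ^ 2 * M := by ring
        have h3 : |γ * f t * (f t ^ 2 - 1)| ≤ γ * M := by
          rw [abs_mul, abs_mul, abs_of_nonneg hγ]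
          have e2 : |f t ^ 2 - 1| ≤ 1 := by rw [abs_le]; constructor <;> nlinarith
          calc γ * |f t| * |f t ^ 2 - 1| ≤ γ * M * 1 := by
                apply mul_le_mul (mul_le_mul_of_nonneg_left hMf hγ) e2 (abs_nonneg _)
                  (by positivity)
            _ = γ * M := by ring
        have habs : |(-(2 / t) * f' t + β / t ^ 2 * f t * u t ^ 2
            + γ * f t * (f t ^ 2 - 1))| ≤ K * M := by
          calc |(-(2 / t) * f' t + β / t ^ 2 * f t * u t ^ 2 + γ * f t * (f t ^ 2 - 1))|
              ≤ |(-(2 / t) * f' t + β / t ^ 2 * f t * u t ^ 2)| + |γ * f t * (f t ^ 2 - 1)| :=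
                abs_add_le _ _
            _ ≤ |-(2 / t) * f' t| + |β / t ^ 2 * f t * u t ^ 2| + |γ * f t * (f t ^ 2 - 1)| :=
                by linarith [abs_add_le (-(2 / t) * f' t) (β / t ^ 2 * f t * u t ^ 2)]
            _ ≤ 2 / r₀ * M + β / r₀ ^ 2 * M + γ * M := by linarith
            _ ≤ K * M := by rw [hKdef]; nlinarith
        simp only [Prod.norm_def]
        apply max_le
        · have hK1 : (1:ℝ) ≤ K := by
            rw [hKdef]
            have e1 : (0:ℝ) ≤ 2 / r₀ := by positivity
            have e2 : (0:ℝ) ≤ β / r₀ ^ 2 := by positivity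
            linarith
          exact le_trans hMf' (le_mul_of_one_le_left hM0 hK1)
        · exact habs
      have hvan := zero_of_gronwall hd hKb ⟨le_refl r₀, hb⟩
        (show (f r₀, f' r₀) = (0 : ℝ × ℝ) by rw [hf0', hf'0]; rfl)
      have h2 : (f b, f' b) = (0 : ℝ × ℝ) := hvan b ⟨hb, le_refl b⟩
      simpa using congrArg Prod.fst h2
    have hzero : Tendsto f atTop (𝓝 0) := by
      have hev : f =ᶠ[atTop] fun _ => (0:ℝ) := by
        filter_upwards [eventually_ge_atTop r₀] with t ht
        exact key t ht
      exact tendsto_const_nhds.congr' hev.symm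
    exact one_ne_zero (tendsto_nhds_unique hfinf hzero)
  -- strict upper bounds
  intro r hr
  refine ⟨hupos r hr, ?_, hfpos r hr, ?_⟩
  · -- u r < 1
    rcases lt_or_eq_of_le (hu01 r hr).2 with h | h
    · exact h
    exfalso
    have hmax : IsLocalMax u r := by
      filter_upwards [isOpen_Ioi.mem_nhds hr] with t ht
      rw [h]; exact (hu01 t ht).2
    have hu'0 : u' r = 0 := hmax.hasDerivAt_eq_zero (hsol r hr).1
    have hc : 0 < α * β / 2 * f r ^ 2 * u r + u r * (u r ^ 2 - 1) / r ^ 2 := by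
      rw [h]
      have h1 : 0 < α * β / 2 * f r ^ 2 :=
        mul_pos (by positivity) (pow_pos (hfpos r hr) 2)
      norm_num
      linarith
    exact no_interior_max hr (fun t ht => (hsol t ht).1) (hsol r hr).2.2.1 hc hu'0
      (fun t ht => by rw [h]; exact (hu01 t ht).2)
  · -- f r < 1
    rcases lt_or_eq_of_le (hf01 r hr).2 with h | h
    · exact h
    exfalso
    have hmax : IsLocalMax f r := by
      filter_upwards [isOpen_Ioi.mem_nhds hr] with t ht
      rw [h]; exact (hf01 t ht).2
    have hf'0 : f' r = 0 := hmax.hasDerivAt_eq_zero (hsol r hr).2.1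
    have hc : 0 < -(2 / r) * f' r + β / r ^ 2 * f r * u r ^ 2 + γ * f r * (f r ^ 2 - 1) := by
      rw [hf'0, h]
      have h1 : 0 < β / r ^ 2 * u r ^ 2 :=
        mul_pos (div_pos hβ (pow_pos hr 2)) (pow_pos (hupos r hr) 2)
      norm_num
      linarith
    exact no_interior_max hr (fun t ht => (hsol t ht).2.1) (hsol r hr).2.2.2 hc hf'0
      (fun t ht => by rw [h]; exact (hf01 t ht).2)
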